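/- arXiv:2508.05778 — 2 statements merged into one kernel-verified Lean document; each statement's English description precedes it below -/
import Mathlib

section
/- Let u, û : ℝ → ℝ^d be differentiable, with du/dt = F(u), y = H(u), and dû/dt = F(û) + (∂T(û))⁻¹ B (y − H(û)), where T : ℝ^d → ℝ^d is C¹ with invertible Jacobian ∂T everywhere and satisfies ∂T(v) F(v) = A T(v) + B H(v) for all v. Then the transformed error E(t) = T(û(t)) − T(u(t)) satisfies the linear ODE dE/dt = A E. In particular, if all eigenvalues of A have negative real part, then ‖T(û(t)) − T(u(t))‖ → 0 as t → ∞. -/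
open Filter Topology

set_option maxHeartbeats 1000000
set_option synthInstance.maxHeartbeats 1000000

noncomputable section

/-- Restriction of a complex-differentiable function to the real line. -/
lemma aux_hasDerivAt_comp_ofReal {S : Type*} [NormedAddCommGroup S] [NormedSpace ℂ S]
    {e : ℂ → S} {e' : S} {t : ℝ} (h : HasDerivAt e e' (t : ℂ)) :
    HasDerivAt (fun s : ℝ => e (s : ℂ)) e' t := by
  have h2 := (h.hasFDerivAt.restrictScalars ℝ).comp t Complex.ofRealCLM.hasFDerivAt
  rw [hasDerivAt_iff_hasFDerivAt]
  exact h2.congr_fderiv (by ext; simp)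


/-- Core decay lemma: if all eigenvalues of a complex matrix have negative real part, then
`exp (t • A) v → 0` as `t → ∞`. -/
lemma aux_kkl_core {d : ℕ} (Ac : Matrix (Fin d) (Fin d) ℂ)
    (hspec : ∀ μ ∈ spectrum ℂ Ac, μ.re < 0) (v : EuclideanSpace ℂ (Fin d)) :
    Tendsto (fun t : ℝ => NormedSpace.exp ((t : ℂ) • Matrix.toEuclideanCLM (𝕜 := ℂ) Ac) v)
      atTop (𝓝 0) := by
  set G : EuclideanSpace ℂ (Fin d) →L[ℂ] EuclideanSpace ℂ (Fin d) :=
    Matrix.toEuclideanCLM (𝕜 := ℂ) Ac with hGdef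
  set L : Module.End ℂ (EuclideanSpace ℂ (Fin d)) := (↑G : EuclideanSpace ℂ (Fin d) →ₗ[ℂ] EuclideanSpace ℂ (Fin d)) with hLdef
  have hv : v ∈ ⨆ μ : ℂ, L.maxGenEigenspace μ := by
    rw [Module.End.iSup_maxGenEigenspace_eq_top]; trivial
  refine Submodule.iSup_induction (x := v)
    (motive := fun w => Tendsto (fun t : ℝ => NormedSpace.exp ((t : ℂ) • G) w) atTop (𝓝 0))
    _ hv ?_ (by simpa using (tendsto_const_nhds :
      Tendsto (fun _ : ℝ => (0 : EuclideanSpace ℂ (Fin d))) atTop _)) ?_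
  · -- each generalized eigenspace
    rintro μ w hw
    by_cases hw0 : w = 0
    · simpa [hw0] using (tendsto_const_nhds :
        Tendsto (fun _ : ℝ => (0 : EuclideanSpace ℂ (Fin d))) atTop _)
    -- μ is an eigenvalue, hence in the spectrum of Ac
    have hμ : μ ∈ spectrum ℂ Ac := by
      have hne : L.maxGenEigenspace μ ≠ ⊥ := by
        intro hbot
        rw [hbot] at hw
        exact hw0 ((Submodule.mem_bot ℂ).mp hw)
      have hev : L.HasEigenvalue μ :=
        Module.End.HasUnifEigenvalue.lt (by norm_num) hne
      obtain ⟨x, hx⟩ := hev.exists_hasEigenvector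
      rw [spectrum.mem_iff]
      intro hu
      have hmap : Matrix.toEuclideanCLM (𝕜 := ℂ)
            (algebraMap ℂ (Matrix (Fin d) (Fin d) ℂ) μ - Ac)
          = μ • (1 : EuclideanSpace ℂ (Fin d) →L[ℂ] EuclideanSpace ℂ (Fin d)) - G := by
        rw [map_sub, Algebra.algebraMap_eq_smul_one, map_smul, map_one]
      have hu2 : IsUnit (μ • (1 : EuclideanSpace ℂ (Fin d) →L[ℂ] EuclideanSpace ℂ (Fin d)) - G) := by
        rw [← hmap]
        exact hu.map (Matrix.toEuclideanCLM (𝕜 := ℂ)).toRingEquiv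
      obtain ⟨U, hU⟩ := hu2
      have hGx : G x = μ • x := hx.apply_eq_smul
      have hx0 : (μ • (1 : EuclideanSpace ℂ (Fin d) →L[ℂ] EuclideanSpace ℂ (Fin d)) - G) x = 0 := by
        simp [ContinuousLinearMap.sub_apply, hGx]
      have hxz : x = 0 := by
        have h2 : ((↑U⁻¹ * ↑U : EuclideanSpace ℂ (Fin d) →L[ℂ] EuclideanSpace ℂ (Fin d))) x = x := by
          rw [U.inv_mul]; simp
        rw [ContinuousLinearMap.mul_apply, hU, hx0, map_zero] at h2
        exact h2.symm
      exact hx.2 hxz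
    have hre : μ.re < 0 := hspec μ hμ
    obtain ⟨k, hk⟩ := (Module.End.mem_maxGenEigenspace L μ w).mp hw
    set Nc : EuclideanSpace ℂ (Fin d) →L[ℂ] EuclideanSpace ℂ (Fin d) := G - μ • 1 with hNcdef
    have hcoe : (⇑Nc : EuclideanSpace ℂ (Fin d) → EuclideanSpace ℂ (Fin d))
        = ⇑(L - μ • (1 : Module.End ℂ (EuclideanSpace ℂ (Fin d)))) := by
      funext z
      simp [hNcdef, hLdef, ContinuousLinearMap.sub_apply]
    have hbase : (Nc ^ k) w = 0 := by
      calc (Nc ^ k) w = (⇑Nc)^[k] w := by rw [FunLike.coe_pow_eq_iterate]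
        _ = (⇑(L - μ • (1 : Module.End ℂ (EuclideanSpace ℂ (Fin d)))))^[k] w := by rw [hcoe]
        _ = ((L - μ • 1) ^ k) w := (Module.End.pow_apply _ _ _).symm
        _ = 0 := hk
    have hNk : ∀ n, k ≤ n → (Nc ^ n) w = 0 := by
      intro n hn
      obtain ⟨m, rfl⟩ := Nat.exists_eq_add_of_le hn
      rw [add_comm, pow_add, ContinuousLinearMap.mul_apply, hbase, map_zero]
    -- key finite-sum formula for the exponential on a generalized eigenvector
    have hkey : ∀ t : ℝ, NormedSpace.exp ((t : ℂ) • G) w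
        = ∑ n ∈ Finset.range k,
            (Complex.exp ((t : ℂ) * μ) * (((n.factorial : ℂ))⁻¹ * (t : ℂ) ^ n)) • ((Nc ^ n) w) := by
      intro t
      letI : NormedAlgebra ℚ (EuclideanSpace ℂ (Fin d) →L[ℂ] EuclideanSpace ℂ (Fin d)) :=
        .restrictScalars ℚ ℂ _
      have hsplit : (t : ℂ) • G = ((t : ℂ) * μ) • (1 : EuclideanSpace ℂ (Fin d) →L[ℂ]
          EuclideanSpace ℂ (Fin d)) + (t : ℂ) • Nc := by
        rw [hNcdef]; module
      have hcomm : Commute (((t : ℂ) * μ) • (1 : EuclideanSpace ℂ (Fin d) →L[ℂ]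
          EuclideanSpace ℂ (Fin d))) ((t : ℂ) • Nc) :=
        ((Commute.one_left Nc).smul_left _).smul_right _
      rw [hsplit, NormedSpace.exp_add_of_commute hcomm]
      have h1 : NormedSpace.exp (((t : ℂ) * μ) • (1 : EuclideanSpace ℂ (Fin d) →L[ℂ]
          EuclideanSpace ℂ (Fin d))) = Complex.exp ((t : ℂ) * μ) • 1 := by
        rw [← Algebra.algebraMap_eq_smul_one, ← NormedSpace.algebraMap_exp_comm,
          Complex.exp_eq_exp_ℂ, Algebra.algebraMap_eq_smul_one]
      rw [h1, smul_mul_assoc, one_mul, ContinuousLinearMap.smul_apply]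
      have h2 : NormedSpace.exp ((t : ℂ) • Nc) w
          = ∑ n ∈ Finset.range k, (((n.factorial : ℂ))⁻¹ * (t : ℂ) ^ n) • ((Nc ^ n) w) := by
        have hsum : Summable (fun n : ℕ => ((n.factorial : ℂ))⁻¹ • ((t : ℂ) • Nc) ^ n) :=
          NormedSpace.expSeries_summable' _
        have hts := (ContinuousLinearMap.apply ℂ (EuclideanSpace ℂ (Fin d)) w).map_tsum hsum
        rw [NormedSpace.exp_eq_tsum ℂ]
        have hterm : ∀ n : ℕ, (((n.factorial : ℂ))⁻¹ • ((t : ℂ) • Nc) ^ n) w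
            = (((n.factorial : ℂ))⁻¹ * (t : ℂ) ^ n) • ((Nc ^ n) w) := by
          intro n
          rw [smul_pow, ContinuousLinearMap.smul_apply, ContinuousLinearMap.smul_apply, smul_smul]
        calc (∑' n : ℕ, ((n.factorial : ℂ))⁻¹ • ((t : ℂ) • Nc) ^ n) w
            = ∑' n : ℕ, (((n.factorial : ℂ))⁻¹ • ((t : ℂ) • Nc) ^ n) w := by simpa using hts
          _ = ∑ n ∈ Finset.range k, (((n.factorial : ℂ))⁻¹ • ((t : ℂ) • Nc) ^ n) w := by
              refine tsum_eq_sum ?_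
              intro n hn
              have hkn : k ≤ n := le_of_not_gt fun hlt => hn (Finset.mem_range.mpr hlt)
              rw [hterm, hNk n hkn, smul_zero]
          _ = ∑ n ∈ Finset.range k, (((n.factorial : ℂ))⁻¹ * (t : ℂ) ^ n) • ((Nc ^ n) w) :=
              Finset.sum_congr rfl fun n _ => hterm n
      rw [h2, Finset.smul_sum]
      exact Finset.sum_congr rfl fun n _ => by rw [smul_smul]
    refine Tendsto.congr (fun t => (hkey t).symm) ?_
    have hsum0 : Tendsto (fun t : ℝ => ∑ n ∈ Finset.range k,
        (Complex.exp ((t : ℂ) * μ) * (((n.factorial : ℂ))⁻¹ * (t : ℂ) ^ n)) • ((Nc ^ n) w)) atTop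
        (𝓝 (∑ n ∈ Finset.range k, (0 : EuclideanSpace ℂ (Fin d)))) := by
      refine tendsto_finset_sum _ fun n _ => ?_
      have hr : (0 : ℝ) < -μ.re := by linarith
      have hbase2 : Tendsto (fun t : ℝ => t ^ n * Real.exp (μ.re * t)) atTop (𝓝 0) := by
        have h1 : Tendsto (fun t : ℝ => -μ.re * t) atTop atTop :=
          Tendsto.const_mul_atTop hr tendsto_id
        have h2 := (Real.tendsto_pow_mul_exp_neg_atTop_nhds_zero n).comp h1
        have h3 := h2.const_mul (((-μ.re) ^ n)⁻¹)
        rw [mul_zero] at h3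
        refine h3.congr fun t => ?_
        have hne : ((-μ.re) ^ n) ≠ 0 := pow_ne_zero _ (ne_of_gt hr)
        simp only [Function.comp]
        rw [mul_pow, neg_mul, neg_neg]
        field_simp
      have hc : Tendsto (fun t : ℝ =>
          Complex.exp ((t : ℂ) * μ) * (((n.factorial : ℂ))⁻¹ * (t : ℂ) ^ n)) atTop (𝓝 0) := by
        rw [tendsto_zero_iff_norm_tendsto_zero]
        have hgoal : Tendsto (fun t : ℝ => ((n.factorial : ℝ))⁻¹ * (t ^ n * Real.exp (μ.re * t)))
            atTop (𝓝 0) := by simpa using hbase2.const_mul ((n.factorial : ℝ))⁻¹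
        refine hgoal.congr' ?_
        filter_upwards [eventually_ge_atTop (0 : ℝ)] with t ht
        rw [norm_mul, norm_mul, norm_pow, Complex.norm_exp]
        have h5 : ((t : ℂ) * μ).re = t * μ.re := by simp
        have h6 : ‖((n.factorial : ℂ))⁻¹‖ = ((n.factorial : ℝ))⁻¹ := by
          rw [norm_inv, Complex.norm_natCast]
        have h7 : ‖(t : ℂ)‖ = t := by
          rw [Complex.norm_real, Real.norm_eq_abs, abs_of_nonneg ht]
        rw [h5, h6, h7]
        ring
      simpa using hc.smul_const ((Nc ^ n) w)
    simpa using hsum0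
  · intro x y hx hy
    simpa using hx.add hy

theorem kkl_identity_observer {d p : ℕ}
    (F : EuclideanSpace ℝ (Fin d) → EuclideanSpace ℝ (Fin d))
    (H : EuclideanSpace ℝ (Fin d) → EuclideanSpace ℝ (Fin p))
    (A : Matrix (Fin d) (Fin d) ℝ) (B : Matrix (Fin d) (Fin p) ℝ)
    (T : EuclideanSpace ℝ (Fin d) → EuclideanSpace ℝ (Fin d))
    (hT : ContDiff ℝ 1 T)
    (hinv : ∀ v, IsUnit (fderiv ℝ T v))
    (hPDE : ∀ v, fderiv ℝ T v (F v) =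
      Matrix.toEuclideanCLM (𝕜 := ℝ) A (T v) + Matrix.toEuclideanLin (𝕜 := ℝ) B (H v))
    (u uhat : ℝ → EuclideanSpace ℝ (Fin d))
    (y : ℝ → EuclideanSpace ℝ (Fin p))
    (hu : ∀ t, HasDerivAt u (F (u t)) t)
    (hy : ∀ t, y t = H (u t))
    (huhat : ∀ t, HasDerivAt uhat
      (F (uhat t) + Ring.inverse (fderiv ℝ T (uhat t))
        (Matrix.toEuclideanLin (𝕜 := ℝ) B (y t - H (uhat t)))) t) :
    (∀ t, HasDerivAt (fun s => T (uhat s) - T (u s))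
        (Matrix.toEuclideanCLM (𝕜 := ℝ) A (T (uhat t) - T (u t))) t) ∧
    ((∀ μ ∈ spectrum ℂ (A.map Complex.ofReal), μ.re < 0) →
      Tendsto (fun t => ‖T (uhat t) - T (u t)‖) atTop (𝓝 0)) := by
  have hTd : ∀ v, HasFDerivAt T (fderiv ℝ T v) v := fun v =>
    ((hT.differentiable one_ne_zero) v).hasFDerivAt
  -- Part 1: the transformed error satisfies the linear ODE
  have hE : ∀ t, HasDerivAt (fun s => T (uhat s) - T (u s))
      (Matrix.toEuclideanCLM (𝕜 := ℝ) A (T (uhat t) - T (u t))) t := by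
    intro t
    have d1 : HasDerivAt (fun s => T (uhat s))
        (fderiv ℝ T (uhat t) (F (uhat t) + Ring.inverse (fderiv ℝ T (uhat t))
          (Matrix.toEuclideanLin (𝕜 := ℝ) B (y t - H (uhat t))))) t :=
      (hTd (uhat t)).comp_hasDerivAt t (huhat t)
    have d2 : HasDerivAt (fun s => T (u s)) (fderiv ℝ T (u t) (F (u t))) t :=
      (hTd (u t)).comp_hasDerivAt t (hu t)
    have e1 : fderiv ℝ T (uhat t) (F (uhat t) + Ring.inverse (fderiv ℝ T (uhat t))
          (Matrix.toEuclideanLin (𝕜 := ℝ) B (y t - H (uhat t))))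
        = Matrix.toEuclideanCLM (𝕜 := ℝ) A (T (uhat t))
          + Matrix.toEuclideanLin (𝕜 := ℝ) B (H (u t)) := by
      have hid : fderiv ℝ T (uhat t) (Ring.inverse (fderiv ℝ T (uhat t))
          (Matrix.toEuclideanLin (𝕜 := ℝ) B (y t - H (uhat t))))
          = Matrix.toEuclideanLin (𝕜 := ℝ) B (y t - H (uhat t)) := by
        rw [← ContinuousLinearMap.mul_apply, Ring.mul_inverse_cancel _ (hinv _),
          ContinuousLinearMap.one_apply]
      rw [map_add, hPDE, hid, hy t, map_sub]
      abel
    have e2 : fderiv ℝ T (u t) (F (u t))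
        = Matrix.toEuclideanCLM (𝕜 := ℝ) A (T (u t))
          + Matrix.toEuclideanLin (𝕜 := ℝ) B (H (u t)) := hPDE (u t)
    have hsub := d1.sub d2
    rw [e1, e2] at hsub
    refine hsub.congr_deriv ?_
    rw [map_sub]
    abel
  refine ⟨hE, fun hspec => ?_⟩
  -- Complexification map J
  classical
  let Jlin : EuclideanSpace ℝ (Fin d) →ₗ[ℝ] EuclideanSpace ℂ (Fin d) :=
    { toFun := fun x => WithLp.toLp 2 (fun i => (x i : ℂ))
      map_add' := fun x z => PiLp.ext fun i => Complex.ofReal_add (x i) (z i)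
      map_smul' := fun r x => PiLp.ext fun i => by
        show ((r * x i : ℝ) : ℂ) = r • ((x i : ℝ) : ℂ)
        rw [Complex.real_smul, Complex.ofReal_mul]
      }
  let J : EuclideanSpace ℝ (Fin d) →L[ℝ] EuclideanSpace ℂ (Fin d) :=
    LinearMap.toContinuousLinearMap Jlin
  have hJapp : ∀ (x : EuclideanSpace ℝ (Fin d)) (i : Fin d), J x i = (x i : ℂ) := fun x i => rfl
  have hmulVec : ∀ (x : EuclideanSpace ℝ (Fin d)) (i : Fin d),
      (Matrix.toEuclideanCLM (𝕜 := ℝ) A x) i = A.mulVec x i := by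
    intro x i
    have h := Matrix.ofLp_toEuclideanCLM (𝕜 := ℝ) A x
    have h2 := congrFun h i
    exact h2
  have hmulVecC : ∀ (x : EuclideanSpace ℂ (Fin d)) (i : Fin d),
      (Matrix.toEuclideanCLM (𝕜 := ℂ) (A.map Complex.ofReal) x) i
        = (A.map Complex.ofReal).mulVec x i := by
    intro x i
    have h := Matrix.ofLp_toEuclideanCLM (𝕜 := ℂ) (A.map Complex.ofReal) x
    have h2 := congrFun h i
    exact h2
  have hGJ : ∀ x : EuclideanSpace ℝ (Fin d),
      J (Matrix.toEuclideanCLM (𝕜 := ℝ) A x)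
        = Matrix.toEuclideanCLM (𝕜 := ℂ) (A.map Complex.ofReal) (J x) := by
    intro x
    ext i
    rw [hJapp, hmulVec, hmulVecC]
    simp only [Matrix.mulVec, dotProduct, Matrix.map_apply]
    push_cast
    exact Finset.sum_congr rfl fun j _ => by rw [hJapp]
  -- The complexified error f satisfies the complex linear ODE
  set f : ℝ → EuclideanSpace ℂ (Fin d) := fun t => J (T (uhat t) - T (u t)) with hfdef
  set G : EuclideanSpace ℂ (Fin d) →L[ℂ] EuclideanSpace ℂ (Fin d) :=
    Matrix.toEuclideanCLM (𝕜 := ℂ) (A.map Complex.ofReal) with hGdef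
  have hf : ∀ t, HasDerivAt f (G (f t)) t := by
    intro t
    have h := (J.hasFDerivAt).comp_hasDerivAt t (hE t)
    rw [hGJ] at h
    exact h
  -- f t = exp (t • G) (f 0)
  letI : NormedAlgebra ℚ (EuclideanSpace ℂ (Fin d) →L[ℂ] EuclideanSpace ℂ (Fin d)) :=
    .restrictScalars ℚ ℂ _
  have hexp : ∀ t : ℝ, f t = NormedSpace.exp ((t : ℂ) • G) (f 0) := by
    have hg : ∀ t, HasDerivAt (fun s : ℝ =>
        ((NormedSpace.exp ((s : ℂ) • (-G))).restrictScalars ℝ) (f s)) 0 t := by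
      intro t
      have h1 : HasDerivAt (fun z : ℂ => NormedSpace.exp (z • (-G)))
          (NormedSpace.exp ((t : ℂ) • (-G)) * (-G)) (t : ℂ) :=
        hasDerivAt_exp_smul_const (𝕂 := ℂ) (-G) (t : ℂ)
      have h4 := aux_hasDerivAt_comp_ofReal h1
      have h4' : HasDerivAt (fun s : ℝ => (NormedSpace.exp ((s : ℂ) • (-G))).restrictScalars ℝ)
          ((NormedSpace.exp ((t : ℂ) • (-G)) * (-G)).restrictScalars ℝ) t :=
        (ContinuousLinearMap.restrictScalarsIsometry ℂ (EuclideanSpace ℂ (Fin d))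
          (EuclideanSpace ℂ (Fin d)) ℝ ℝ).toContinuousLinearMap.hasFDerivAt.comp_hasDerivAt t h4
      have h5 := h4'.clm_apply (hf t)
      have hz : ((NormedSpace.exp ((t : ℂ) • (-G)) * (-G)).restrictScalars ℝ) (f t)
          + ((NormedSpace.exp ((t : ℂ) • (-G))).restrictScalars ℝ) (G (f t)) = 0 := by
        simp [ContinuousLinearMap.mul_apply]
      rw [hz] at h5
      exact h5
    have hconst : ∀ t : ℝ, ((NormedSpace.exp ((t : ℂ) • (-G))).restrictScalars ℝ) (f t)
        = ((NormedSpace.exp (((0 : ℝ) : ℂ) • (-G))).restrictScalars ℝ) (f 0) := by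
      intro t
      exact is_const_of_deriv_eq_zero (fun s => (hg s).differentiableAt)
        (fun s => (hg s).deriv) t 0
    intro t
    have h0 : ((NormedSpace.exp (((0 : ℝ) : ℂ) • (-G))).restrictScalars ℝ) (f 0) = f 0 := by
      have hz0 : (((0 : ℝ) : ℂ)) • (-G) = 0 := by
        rw [Complex.ofReal_zero]
        exact zero_smul ℂ (-G)
      rw [hz0, NormedSpace.exp_zero]
      rfl
    have h5 := (hconst t).trans h0
    have h6 : NormedSpace.exp ((t : ℂ) • G)
        (((NormedSpace.exp ((t : ℂ) • (-G))).restrictScalars ℝ) (f t)) = f t := by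
      have happ : ((NormedSpace.exp ((t : ℂ) • (-G))).restrictScalars ℝ) (f t)
          = (NormedSpace.exp ((t : ℂ) • (-G))) (f t) := rfl
      rw [happ, ← ContinuousLinearMap.mul_apply, ← NormedSpace.exp_add_of_commute
        ((((Commute.refl G).neg_right).smul_left _).smul_right _)]
      have hzero : (t : ℂ) • G + (t : ℂ) • (-G) = 0 := by module
      rw [hzero, NormedSpace.exp_zero, ContinuousLinearMap.one_apply]
    rw [← h6, h5]
  -- norms agree under complexification
  have hnormJ : ∀ x : EuclideanSpace ℝ (Fin d), ‖J x‖ = ‖x‖ := by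
    intro x
    rw [EuclideanSpace.norm_eq, EuclideanSpace.norm_eq]
    congr 1
    refine Finset.sum_congr rfl fun i _ => ?_
    rw [hJapp, Complex.norm_real]
  have hcore := (aux_kkl_core (A.map Complex.ofReal) hspec (f 0)).norm
  rw [norm_zero] at hcore
  refine Tendsto.congr (fun t => ?_) hcore
  rw [← hexp t, hfdef]
  exact hnormJ _
end
end

section
/- Let ũ, û : ℝ → ℝ^d be differentiable with dũ/dt = F(ũ) + G(ũ, y) and dû/dt = F(û) + (∂T(û))⁻¹ B (y − H(û)), where T is C¹ with everywhere invertible Jacobian satisfying ∂T(v) F(v) = A T(v) + B H(v) for all v, and y : ℝ → ℝ^p. Then E(t) := T(ũ(t)) − T(û(t)) satisfies dE/dt = A E + R(t), where R(t) = ∂T(ũ(t)) [ G(ũ(t), y(t)) − (∂T(ũ(t)))⁻¹ B (y(t) − H(ũ(t))) ]. -/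
noncomputable section

theorem nnn_error_dynamics {d p : ℕ}
    (F : EuclideanSpace ℝ (Fin d) → EuclideanSpace ℝ (Fin d))
    (H : EuclideanSpace ℝ (Fin d) → EuclideanSpace ℝ (Fin p))
    (G : EuclideanSpace ℝ (Fin d) → EuclideanSpace ℝ (Fin p) → EuclideanSpace ℝ (Fin d))
    (A : Matrix (Fin d) (Fin d) ℝ) (B : Matrix (Fin d) (Fin p) ℝ)
    (T : EuclideanSpace ℝ (Fin d) → EuclideanSpace ℝ (Fin d))
    (hT : ContDiff ℝ 1 T)
    (hinv : ∀ v, IsUnit (fderiv ℝ T v))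
    (hPDE : ∀ v, fderiv ℝ T v (F v) =
      Matrix.toEuclideanCLM (𝕜 := ℝ) A (T v) + Matrix.toEuclideanLin (𝕜 := ℝ) B (H v))
    (utilde uhat : ℝ → EuclideanSpace ℝ (Fin d))
    (y : ℝ → EuclideanSpace ℝ (Fin p))
    (hutilde : ∀ t, HasDerivAt utilde (F (utilde t) + G (utilde t) (y t)) t)
    (huhat : ∀ t, HasDerivAt uhat
      (F (uhat t) + Ring.inverse (fderiv ℝ T (uhat t))
        (Matrix.toEuclideanLin (𝕜 := ℝ) B (y t - H (uhat t)))) t)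
    (R : ℝ → EuclideanSpace ℝ (Fin d))
    (hRdef : ∀ t, R t = fderiv ℝ T (utilde t)
      (G (utilde t) (y t) - Ring.inverse (fderiv ℝ T (utilde t))
        (Matrix.toEuclideanLin (𝕜 := ℝ) B (y t - H (utilde t))))) :
    ∀ t, HasDerivAt (fun s => T (utilde s) - T (uhat s))
      (Matrix.toEuclideanCLM (𝕜 := ℝ) A (T (utilde t) - T (uhat t)) + R t) t := by
  intro t
  have hTd : ∀ v, HasFDerivAt T (fderiv ℝ T v) v := fun v =>
    (hT.differentiable one_ne_zero v).hasFDerivAt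
  have h1 := (hTd (utilde t)).comp_hasDerivAt t (hutilde t)
  have h2 := (hTd (uhat t)).comp_hasDerivAt t (huhat t)
  have hcan : ∀ v x, fderiv ℝ T v (Ring.inverse (fderiv ℝ T v) x) = x := by
    intro v x
    have h := Ring.mul_inverse_cancel _ (hinv v)
    calc fderiv ℝ T v (Ring.inverse (fderiv ℝ T v) x)
        = (fderiv ℝ T v * Ring.inverse (fderiv ℝ T v)) x := rfl
      _ = x := by rw [h]; rfl
  have h := h1.sub h2
  refine HasDerivAt.congr_deriv h ?_
  simp only [hRdef, map_add, map_sub, hPDE, hcan]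
  abel
end
end
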